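/- Let 1 ≤ k < m, let (λ_1, u_1), …, (λ_k, u_k) be exact eigenpairs of A (A u_i = λ_i u_i) with λ_1 ≤ ⋯ ≤ λ_k, and set μ_i = 1/λ_i. Assume δ_{k,i} := min_{k<j≤m} |μ̃_j − μ_i| > 0 for 1 ≤ i ≤ k. Let E_{m,k} be the A-orthogonal projection onto span{ũ_1, …, ũ_k}. Then for each 1 ≤ i ≤ k: ‖u_i − E_{m,k} u_i‖_A ≤ √(1 + (μ̃_{k+1}/δ_{k,i}²) η_K²) · ‖(I − P_K) u_i‖_A. -/

import Mathlib

open Matrix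

section helpers
variable {n : ℕ} {A : Matrix (Fin n) (Fin n) ℝ}

lemma Asymm (hA : A.PosDef) : Aᵀ = A := by
  have h := hA.isHermitian.eq
  rwa [conjTranspose_eq_transpose_of_trivial] at h

lemma bsymm (hA : A.PosDef) (x y : Fin n → ℝ) :
    x ⬝ᵥ (A *ᵥ y) = y ⬝ᵥ (A *ᵥ x) := by
  rw [dotProduct_mulVec, ← mulVec_transpose, Asymm hA, dotProduct_comm]

lemma bpos (hA : A.PosDef) {x : Fin n → ℝ} (hx : x ≠ 0) : 0 < x ⬝ᵥ (A *ᵥ x) := by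
  have := hA.dotProduct_mulVec_pos hx
  simpa using this

lemma bnonneg (hA : A.PosDef) (x : Fin n → ℝ) : 0 ≤ x ⬝ᵥ (A *ᵥ x) := by
  rcases eq_or_ne x 0 with h | h
  · simp [h]
  · exact (bpos hA h).le

lemma bzero (hA : A.PosDef) {x : Fin n → ℝ} (h : x ⬝ᵥ (A *ᵥ x) = 0) : x = 0 := by
  by_contra hx
  exact absurd h (bpos hA hx).ne'

lemma dnonneg (x : Fin n → ℝ) : 0 ≤ x ⬝ᵥ x :=
  Finset.sum_nonneg fun i _ => mul_self_nonneg _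

lemma dpos {x : Fin n → ℝ} (hx : x ≠ 0) : 0 < x ⬝ᵥ x := by
  rcases lt_or_eq_of_le (dnonneg x) with h | h
  · exact h
  · exact absurd (dotProduct_self_eq_zero.1 h.symm) hx

lemma dp_sum {ι : Type*} (s : Finset ι) (f : ι → Fin n → ℝ) (w : Fin n → ℝ) :
    w ⬝ᵥ (∑ j ∈ s, f j) = ∑ j ∈ s, w ⬝ᵥ f j := by
  simp [dotProduct, Finset.mul_sum]
  exact Finset.sum_comm

lemma sum_dp {ι : Type*} (s : Finset ι) (f : ι → Fin n → ℝ) (w : Fin n → ℝ) :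
    (∑ j ∈ s, f j) ⬝ᵥ w = ∑ j ∈ s, f j ⬝ᵥ w := by
  simp [dotProduct, Finset.sum_mul]
  exact Finset.sum_comm

lemma mv_sum {ι : Type*} (s : Finset ι) (f : ι → Fin n → ℝ) :
    A *ᵥ (∑ j ∈ s, f j) = ∑ j ∈ s, A *ᵥ f j :=
  map_sum A.mulVecLin f s

lemma bexpand (hA : A.PosDef) (r p : Fin n → ℝ) :
    (r + p) ⬝ᵥ (A *ᵥ (r + p)) =
      r ⬝ᵥ (A *ᵥ r) + 2 * (r ⬝ᵥ (A *ᵥ p)) + p ⬝ᵥ (A *ᵥ p) := by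
  rw [mulVec_add, dotProduct_add, add_dotProduct, add_dotProduct, bsymm hA p r]
  ring

lemma cauchy (hA : A.PosDef) (x y : Fin n → ℝ) :
    (x ⬝ᵥ (A *ᵥ y))^2 ≤ (x ⬝ᵥ (A *ᵥ x)) * (y ⬝ᵥ (A *ᵥ y)) := by
  set a := y ⬝ᵥ (A *ᵥ y)
  set b := 2 * (x ⬝ᵥ (A *ᵥ y))
  set c := x ⬝ᵥ (A *ᵥ x)
  have h : ∀ t : ℝ, 0 ≤ a * (t * t) + b * t + c := by
    intro t
    have h0 := bnonneg hA (x + t • y)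
    have expand : (x + t • y) ⬝ᵥ (A *ᵥ (x + t • y)) = a * (t * t) + b * t + c := by
      simp only [mulVec_add, mulVec_smul, dotProduct_add, add_dotProduct,
        dotProduct_smul, smul_dotProduct, smul_eq_mul]
      rw [bsymm hA y x]
      ring
    rw [expand] at h0
    exact h0
  have hd := discrim_le_zero h
  rw [discrim] at hd
  have hb : b = 2 * (x ⬝ᵥ (A *ᵥ y)) := rfl
  have hc : c = x ⬝ᵥ (A *ᵥ x) := rfl
  have ha : a = y ⬝ᵥ (A *ᵥ y) := rfl
  rw [hb, hc, ha] at hd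
  nlinarith [hd]

lemma cauchy' (hA : A.PosDef) (x y : Fin n → ℝ) :
    x ⬝ᵥ (A *ᵥ y) ≤ Real.sqrt (x ⬝ᵥ (A *ᵥ x)) * Real.sqrt (y ⬝ᵥ (A *ᵥ y)) := by
  have h := cauchy hA x y
  calc x ⬝ᵥ (A *ᵥ y) ≤ |x ⬝ᵥ (A *ᵥ y)| := le_abs_self _
    _ = Real.sqrt ((x ⬝ᵥ (A *ᵥ y))^2) := (Real.sqrt_sq_eq_abs _).symm
    _ ≤ Real.sqrt ((x ⬝ᵥ (A *ᵥ x)) * (y ⬝ᵥ (A *ᵥ y))) := Real.sqrt_le_sqrt h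
    _ = _ := Real.sqrt_mul (bnonneg hA x) _

lemma ortho_span {s : Set (Fin n → ℝ)} {z : Fin n → ℝ}
    (h : ∀ w ∈ s, w ⬝ᵥ (A *ᵥ z) = 0) :
    ∀ v ∈ Submodule.span ℝ s, v ⬝ᵥ (A *ᵥ z) = 0 := by
  intro v hv
  induction hv using Submodule.span_induction with
  | mem x hx => exact h x hx
  | zero => simp
  | add x y _ _ hx hy => rw [add_dotProduct, hx, hy, add_zero]
  | smul r x _ hx => rw [smul_dotProduct, hx, smul_zero]

lemma zero_of_ortho (hA : A.PosDef) {s : Set (Fin n → ℝ)} {z : Fin n → ℝ}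
    (hz : z ∈ Submodule.span ℝ s) (h : ∀ w ∈ s, w ⬝ᵥ (A *ᵥ z) = 0) : z = 0 :=
  bzero hA (ortho_span h z hz)

lemma span_tu_eq (hA : A.PosDef) {m : ℕ} (K : Submodule ℝ (Fin n → ℝ))
    (hK : Module.finrank ℝ K = m) (tu : Fin m → (Fin n → ℝ)) (htu : ∀ j, tu j ∈ K)
    (htortho : ∀ i j, tu i ⬝ᵥ (A *ᵥ tu j) = if i = j then (1:ℝ) else 0) :
    Submodule.span ℝ (Set.range tu) = K := by
  have hli : LinearIndependent ℝ tu := by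
    rw [Fintype.linearIndependent_iff]
    intro g hg l
    have h0 : tu l ⬝ᵥ (A *ᵥ (∑ j, g j • tu j)) = g l := by
      rw [mv_sum, dp_sum]
      simp only [mulVec_smul, dotProduct_smul, smul_eq_mul, htortho]
      simp [mul_ite, mul_one, mul_zero, Finset.sum_ite_eq]
    rw [hg] at h0
    simpa using h0.symm
  have hle : Submodule.span ℝ (Set.range tu) ≤ K :=
    Submodule.span_le.2 (by rintro _ ⟨j, rfl⟩; exact htu j)
  have hfr : Module.finrank ℝ (Submodule.span ℝ (Set.range tu)) = m := by
    rw [finrank_span_eq_card hli, Fintype.card_fin]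
  exact Submodule.eq_of_le_of_finrank_le hle (by rw [hK, hfr])

end helpers

/-- The Euclidean (`L²`) norm on `ℝⁿ`: `‖x‖₂ = √(xᵀx)`. -/
noncomputable def l2N {n : ℕ} (x : Fin n → ℝ) : ℝ := Real.sqrt (x ⬝ᵥ x)

/-- The energy norm induced by the matrix `A`: `‖x‖_A = √(xᵀAx)`. -/
noncomputable def aN {n : ℕ} (A : Matrix (Fin n) (Fin n) ℝ) (x : Fin n → ℝ) : ℝ :=
  Real.sqrt (x ⬝ᵥ (A *ᵥ x))

/-- `η_K = sup_{‖g‖₂ = 1} ‖(I - P_K) A⁻¹ g‖_A`, where `P` is the `A`-orthogonal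
projection onto the subspace `K`. -/
noncomputable def etaK {n : ℕ} (A : Matrix (Fin n) (Fin n) ℝ)
    (P : (Fin n → ℝ) →ₗ[ℝ] (Fin n → ℝ)) : ℝ :=
  sSup ((fun g => aN A ((A⁻¹ *ᵥ g) - P (A⁻¹ *ᵥ g))) '' {g | l2N g = 1})

section helpers3
variable {n : ℕ} {A : Matrix (Fin n) (Fin n) ℝ}

lemma mulVec_inv_cancel (hA : A.PosDef) (v : Fin n → ℝ) : A *ᵥ (A⁻¹ *ᵥ v) = v := by
  rw [mulVec_mulVec, Matrix.mul_nonsing_inv _ (isUnit_iff_ne_zero.2 hA.det_pos.ne'),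
    one_mulVec]

lemma aN_smul (t : ℝ) (ht : 0 ≤ t) (x : Fin n → ℝ) :
    aN A (t • x) = t * aN A x := by
  unfold aN
  rw [mulVec_smul, smul_dotProduct, dotProduct_smul, smul_eq_mul, smul_eq_mul, ← mul_assoc,
    Real.sqrt_mul (by positivity), Real.sqrt_mul_self ht]

lemma etaK_bound (hA : A.PosDef) (K : Submodule ℝ (Fin n → ℝ))
    (P : (Fin n → ℝ) →ₗ[ℝ] (Fin n → ℝ)) (hPmem : ∀ x, P x ∈ K)
    (hPproj : ∀ x, ∀ y ∈ K, (P x) ⬝ᵥ (A *ᵥ y) = x ⬝ᵥ (A *ᵥ y)) (g : Fin n → ℝ) :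
    aN A ((A⁻¹ *ᵥ g) - P (A⁻¹ *ᵥ g)) ≤ etaK A P * l2N g := by
  have hcontr : ∀ x : Fin n → ℝ, aN A (x - P x) ≤ aN A x := by
    intro x
    unfold aN
    apply Real.sqrt_le_sqrt
    have hx : x = (x - P x) + P x := by abel
    have hexp : x ⬝ᵥ (A *ᵥ x) = (x - P x) ⬝ᵥ (A *ᵥ (x - P x))
        + 2 * ((x - P x) ⬝ᵥ (A *ᵥ P x)) + (P x) ⬝ᵥ (A *ᵥ P x) := by
      conv_lhs => rw [hx]
      exact bexpand hA _ _
    have hres : (x - P x) ⬝ᵥ (A *ᵥ P x) = 0 := by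
      rw [sub_dotProduct, hPproj x (P x) (hPmem x), sub_self]
    rw [hexp, hres]
    have := bnonneg hA (P x)
    linarith
  set M : ℝ := Real.sqrt (∑ j, ∑ l, |A⁻¹ j l|) with hM
  have habs : ∀ h ∈ {g | l2N g = 1},
      aN A ((A⁻¹ *ᵥ h) - P (A⁻¹ *ᵥ h)) ≤ M := by
    intro h hh
    have hh1 : h ⬝ᵥ h = 1 := by
      have h0 : (0:ℝ) ≤ h ⬝ᵥ h := dnonneg h
      have := hh
      simp only [Set.mem_setOf_eq, l2N] at this
      nlinarith [Real.sq_sqrt h0, this]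
    have hle1 : ∀ i, |h i| ≤ 1 := by
      intro i
      rw [abs_le_one_iff_mul_self_le_one]
      calc h i * h i ≤ ∑ l, h l * h l :=
            Finset.single_le_sum (fun l _ => mul_self_nonneg (h l)) (Finset.mem_univ i)
        _ = 1 := hh1
    refine le_trans (hcontr _) ?_
    unfold aN
    rw [hM]
    apply Real.sqrt_le_sqrt
    have hAinv : (A⁻¹ *ᵥ h) ⬝ᵥ (A *ᵥ (A⁻¹ *ᵥ h)) = (A⁻¹ *ᵥ h) ⬝ᵥ h := by
      rw [mulVec_inv_cancel hA]
    rw [hAinv]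
    calc (A⁻¹ *ᵥ h) ⬝ᵥ h = ∑ j, (∑ l, A⁻¹ j l * h l) * h j := by
          simp [dotProduct, mulVec]
      _ ≤ ∑ j, ∑ l, |A⁻¹ j l| := by
          apply Finset.sum_le_sum
          intro j _
          calc (∑ l, A⁻¹ j l * h l) * h j ≤ |(∑ l, A⁻¹ j l * h l) * h j| := le_abs_self _
            _ = |∑ l, A⁻¹ j l * h l| * |h j| := abs_mul _ _
            _ ≤ |∑ l, A⁻¹ j l * h l| * 1 :=
                mul_le_mul_of_nonneg_left (hle1 j) (abs_nonneg _)
            _ = |∑ l, A⁻¹ j l * h l| := mul_one _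
            _ ≤ ∑ l, |A⁻¹ j l * h l| := Finset.abs_sum_le_sum_abs _ _
            _ ≤ ∑ l, |A⁻¹ j l| := by
                apply Finset.sum_le_sum
                intro l _
                rw [abs_mul]
                calc |A⁻¹ j l| * |h l| ≤ |A⁻¹ j l| * 1 :=
                      mul_le_mul_of_nonneg_left (hle1 l) (abs_nonneg _)
                  _ = _ := mul_one _
  have hbdd : BddAbove ((fun g => aN A ((A⁻¹ *ᵥ g) - P (A⁻¹ *ᵥ g))) '' {g | l2N g = 1}) := by
    refine ⟨M, ?_⟩
    rintro _ ⟨h, hh, rfl⟩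
    exact habs h hh
  rcases eq_or_ne g 0 with hg0 | hg0
  · simp [hg0, aN, l2N]
  · have hgg : 0 < g ⬝ᵥ g := dpos hg0
    set t := l2N g with htdef
    have ht : 0 < t := Real.sqrt_pos.2 hgg
    have ht2 : t * t = g ⬝ᵥ g := Real.mul_self_sqrt hgg.le
    set g₀ : Fin n → ℝ := t⁻¹ • g with hg₀
    have hg₀1 : l2N g₀ = 1 := by
      unfold g₀
      unfold l2N
      rw [smul_dotProduct, dotProduct_smul, smul_eq_mul, smul_eq_mul, ← ht2]
      rw [show t⁻¹ * (t⁻¹ * (t * t)) = 1 by field_simp]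
      exact Real.sqrt_one
    have hdecomp : (A⁻¹ *ᵥ g) - P (A⁻¹ *ᵥ g) = t • ((A⁻¹ *ᵥ g₀) - P (A⁻¹ *ᵥ g₀)) := by
      unfold g₀
      rw [mulVec_smul, P.map_smul, ← smul_sub, smul_inv_smul₀ ht.ne']
    rw [hdecomp, aN_smul t ht.le]
    have hmem : aN A ((A⁻¹ *ᵥ g₀) - P (A⁻¹ *ᵥ g₀)) ∈
        ((fun g => aN A ((A⁻¹ *ᵥ g) - P (A⁻¹ *ᵥ g))) '' {g | l2N g = 1}) :=
      ⟨g₀, hg₀1, rfl⟩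
    have hle := le_csSup hbdd hmem
    calc t * aN A ((A⁻¹ *ᵥ g₀) - P (A⁻¹ *ᵥ g₀)) ≤ t * etaK A P :=
          mul_le_mul_of_nonneg_left hle ht.le
      _ = etaK A P * l2N g := by rw [mul_comm]

end helpers3

set_option maxHeartbeats 1000000 in
/-- Energy-norm error estimate for the first `k` eigenvector approximations
(first part of Theorem 3.2):
`‖u_i − E_{m,k} u_i‖_A ≤ √(1 + (μ̃_{k+1}/δ_{k,i}²) η_K²) ‖(I − P_K) u_i‖_A`. -/
theorem stmt5 {n m : ℕ} (A : Matrix (Fin n) (Fin n) ℝ) (hA : A.PosDef)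
    -- `K` is an `m`-dimensional subspace of `ℝⁿ`
    (K : Submodule ℝ (Fin n → ℝ)) (hK : Module.finrank ℝ K = m)
    -- `P` is the `A`-orthogonal (Galerkin) projection onto `K`
    (P : (Fin n → ℝ) →ₗ[ℝ] (Fin n → ℝ))
    (hPmem : ∀ x, P x ∈ K)
    (hPproj : ∀ x, ∀ y ∈ K, (P x) ⬝ᵥ (A *ᵥ y) = x ⬝ᵥ (A *ᵥ y))
    -- the Ritz pairs `(λ̃_j, ũ_j)` of `A` on `K`, with `A`-orthonormal Ritz vectors
    (tlam : Fin m → ℝ) (tu : Fin m → (Fin n → ℝ)) (htmono : Monotone tlam)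
    (htu : ∀ j, tu j ∈ K)
    (hRitz : ∀ j, ∀ v ∈ K, ((A *ᵥ tu j) - tlam j • tu j) ⬝ᵥ v = 0)
    (htortho : ∀ i j, tu i ⬝ᵥ (A *ᵥ tu j) = if i = j then (1 : ℝ) else 0)
    -- `1 ≤ k < m`
    (k : ℕ) (hk : 1 ≤ k) (hkm : k < m)
    -- `(λ_1, u_1), …, (λ_k, u_k)` are exact eigenpairs of `A` with `λ_1 ≤ ⋯ ≤ λ_k`
    (lam : Fin k → ℝ) (u : Fin k → (Fin n → ℝ)) (hlmono : Monotone lam)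
    (hu : ∀ i, u i ≠ 0) (heig : ∀ i, A *ᵥ u i = lam i • u i)
    -- `δ_{k,i} > 0` is (a lower bound for) `min_{k < j ≤ m} |μ̃_j − μ_i|`,
    -- where `μ_i = 1/λ_i`, `μ̃_j = 1/λ̃_j`
    (δ : Fin k → ℝ) (hδpos : ∀ i, 0 < δ i)
    (hδ : ∀ (i : Fin k) (j : Fin m), k ≤ (j : ℕ) → δ i ≤ |1 / tlam j - 1 / lam i|)
    -- `E` is the `A`-orthogonal projection `E_{m,k}` onto `span{ũ_1, …, ũ_k}`
    (E : (Fin n → ℝ) →ₗ[ℝ] (Fin n → ℝ))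
    (hEmem : ∀ x, E x ∈
      Submodule.span ℝ (Set.range fun i : Fin k => tu (Fin.castLE hkm.le i)))
    (hEproj : ∀ x, ∀ y ∈
      Submodule.span ℝ (Set.range fun i : Fin k => tu (Fin.castLE hkm.le i)),
      (E x) ⬝ᵥ (A *ᵥ y) = x ⬝ᵥ (A *ᵥ y)) :
    ∀ i : Fin k, aN A (u i - E (u i)) ≤
      Real.sqrt (1 + (1 / tlam ⟨k, hkm⟩) / (δ i) ^ 2 * (etaK A P) ^ 2) *
        aN A (u i - P (u i)) := by
  intro i
  -- basic facts about Ritz values/vectors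
  have hkey : ∀ j l : Fin m, tlam j * (tu j ⬝ᵥ tu l) = if l = j then (1:ℝ) else 0 := by
    intro j l
    have h := hRitz j (tu l) (htu l)
    rw [sub_dotProduct, smul_dotProduct, smul_eq_mul, sub_eq_zero] at h
    rw [← h, dotProduct_comm, htortho l j]
  have htpos : ∀ j, 0 < tlam j := by
    intro j
    have h := hkey j j
    rw [if_pos rfl] at h
    nlinarith [dnonneg (tu j), h]
  have htt : ∀ j l, tu j ⬝ᵥ tu l = if j = l then 1 / tlam j else 0 := by
    intro j l
    by_cases hjl : j = l
    · subst hjl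
      rw [if_pos rfl]
      have h := hkey j j
      rw [if_pos rfl] at h
      rw [eq_div_iff (htpos j).ne']
      linear_combination h
    · rw [if_neg hjl]
      have h := hkey j l
      rw [if_neg (Ne.symm hjl)] at h
      exact (mul_eq_zero.1 h).resolve_left (htpos j).ne'
  have hlpos : 0 < lam i := by
    have h1 : u i ⬝ᵥ (A *ᵥ u i) = lam i * (u i ⬝ᵥ u i) := by
      rw [heig, dotProduct_smul, smul_eq_mul]
    have h2 := bpos hA (hu i)
    have h3 := dpos (hu i)
    nlinarith [h1, h2, h3]
  -- coefficients
  set c : Fin m → ℝ := fun j => (u i) ⬝ᵥ (A *ᵥ tu j) with hc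
  have hspan := span_tu_eq hA K hK tu htu htortho
  -- P (u i) in the Ritz basis
  have hcPu : ∀ l, tu l ⬝ᵥ (A *ᵥ P (u i)) = c l := by
    intro l
    rw [bsymm hA, hPproj (u i) (tu l) (htu l)]
  have hq : ∀ l, tu l ⬝ᵥ (A *ᵥ (∑ j, c j • tu j)) = c l := by
    intro l
    rw [mv_sum, dp_sum]
    simp only [mulVec_smul, dotProduct_smul, smul_eq_mul, htortho]
    simp [mul_ite, mul_one, mul_zero, Finset.sum_ite_eq]
  have hPu : P (u i) = ∑ j, c j • tu j := by
    have hzmem : P (u i) - ∑ j, c j • tu j ∈ Submodule.span ℝ (Set.range tu) := by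
      rw [hspan]
      exact sub_mem (hPmem _)
        (Submodule.sum_mem _ fun j _ => Submodule.smul_mem _ _ (htu j))
    have h0 := zero_of_ortho hA hzmem (by
      rintro _ ⟨l, rfl⟩
      rw [mulVec_sub, dotProduct_sub, hcPu l, hq l, sub_self])
    exact sub_eq_zero.1 h0
  -- E (u i) in the Ritz basis
  have hcast_inj : Function.Injective (Fin.castLE hkm.le) := Fin.castLE_injective _
  set r : Fin n → ℝ := ∑ j : Fin k, c (Fin.castLE hkm.le j) • tu (Fin.castLE hkm.le j)
    with hrdef
  have hrgen : ∀ l : Fin k, tu (Fin.castLE hkm.le l) ⬝ᵥ (A *ᵥ r) =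
      c (Fin.castLE hkm.le l) := by
    intro l
    rw [hrdef, mv_sum, dp_sum]
    simp only [mulVec_smul, dotProduct_smul, smul_eq_mul, htortho, hcast_inj.eq_iff]
    simp [mul_ite, mul_one, mul_zero, Finset.sum_ite_eq]
  have hEgen : ∀ l : Fin k, tu (Fin.castLE hkm.le l) ⬝ᵥ (A *ᵥ E (u i)) =
      c (Fin.castLE hkm.le l) := by
    intro l
    rw [bsymm hA, hEproj (u i) _ (Submodule.subset_span ⟨l, rfl⟩)]
  have hEu : E (u i) = r := by
    have hzmem : E (u i) - r ∈
        Submodule.span ℝ (Set.range fun i : Fin k => tu (Fin.castLE hkm.le i)) := by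
      exact sub_mem (hEmem _)
        (Submodule.sum_mem _ fun j _ => Submodule.smul_mem _ _
          (Submodule.subset_span ⟨j, rfl⟩))
    have h0 := zero_of_ortho hA hzmem (by
      rintro _ ⟨l, rfl⟩
      rw [mulVec_sub, dotProduct_sub, hEgen l, hrgen l, sub_self])
    exact sub_eq_zero.1 h0
  -- reindex: E (u i) as a filtered sum
  have himg : (Finset.univ.image (Fin.castLE hkm.le) : Finset (Fin m)) =
      Finset.univ.filter (fun j : Fin m => (j:ℕ) < k) := by
    ext j
    simp only [Finset.mem_image, Finset.mem_filter, Finset.mem_univ, true_and]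
    constructor
    · rintro ⟨l, rfl⟩
      simpa using l.isLt
    · intro h
      exact ⟨⟨(j:ℕ), h⟩, by simp [Fin.ext_iff]⟩
  have hr2 : r = ∑ j ∈ Finset.univ.filter (fun j : Fin m => (j:ℕ) < k), c j • tu j := by
    rw [hrdef, ← himg, Finset.sum_image (fun a _ b _ h => hcast_inj h)]
  set F : Finset (Fin m) := Finset.univ.filter (fun j : Fin m => ¬ (j:ℕ) < k) with hF
  set sv : Fin n → ℝ := ∑ j ∈ F, c j • tu j with hsv
  have hs : P (u i) - E (u i) = sv := by
    rw [hPu, hEu, hr2, hsv, hF,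
      ← Finset.sum_filter_add_sum_filter_not Finset.univ (fun j : Fin m => (j:ℕ) < k)
        (fun j => c j • tu j)]
    abel
  have hsvK : sv ∈ K := by
    rw [hsv]
    exact Submodule.sum_mem _ fun j _ => Submodule.smul_mem _ _ (htu j)
  set w : Fin n → ℝ := u i - P (u i) with hw
  have hwv : ∀ v ∈ K, w ⬝ᵥ (A *ᵥ v) = 0 := by
    intro v hv
    rw [hw, sub_dotProduct, hPproj (u i) v hv, sub_self]
  have hdecomp : u i - E (u i) = w + sv := by
    rw [← hs, hw]; abel
  have hpyth : (u i - E (u i)) ⬝ᵥ (A *ᵥ (u i - E (u i))) =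
      w ⬝ᵥ (A *ᵥ w) + sv ⬝ᵥ (A *ᵥ sv) := by
    rw [hdecomp, bexpand hA, hwv sv hsvK]
    ring
  have htuAsv : ∀ j ∈ F, tu j ⬝ᵥ (A *ᵥ sv) = c j := by
    intro j hj
    rw [hsv, mv_sum, dp_sum]
    simp only [mulVec_smul, dotProduct_smul, smul_eq_mul, htortho, mul_ite, mul_one,
      mul_zero]
    rw [Finset.sum_ite_eq]
    exact if_pos hj
  have hsv2 : sv ⬝ᵥ (A *ᵥ sv) = ∑ j ∈ F, (c j)^2 := by
    nth_rewrite 1 [hsv]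
    rw [sum_dp]
    apply Finset.sum_congr rfl
    intro j hj
    rw [smul_dotProduct, smul_eq_mul, htuAsv j hj]
    ring
  -- key identity
  have htuw : ∀ j : Fin m, tu j ⬝ᵥ w = c j * (1 / lam i - 1 / tlam j) := by
    intro j
    have h1 : tu j ⬝ᵥ (u i) = c j / lam i := by
      have h2 : c j = lam i * (tu j ⬝ᵥ u i) := by
        rw [hc]
        simp only
        rw [bsymm hA, heig, dotProduct_smul, smul_eq_mul]
      rw [h2]
      field_simp
    have h3 : tu j ⬝ᵥ (P (u i)) = c j / tlam j := by
      have h := hRitz j (P (u i)) (hPmem _)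
      rw [sub_dotProduct, smul_dotProduct, smul_eq_mul, sub_eq_zero] at h
      have h4 : (A *ᵥ tu j) ⬝ᵥ P (u i) = c j := by
        rw [dotProduct_comm, hPproj (u i) (tu j) (htu j)]
      rw [h4] at h
      rw [eq_div_iff (htpos j).ne']
      linear_combination -h
    rw [hw, dotProduct_sub, h1, h3]
    field_simp
  -- the auxiliary vector g and the weighted sum S
  set d : Fin m → ℝ := fun j => c j * (1 / lam i - 1 / tlam j) with hd
  set gv : Fin n → ℝ := ∑ j ∈ F, (d j * tlam j) • tu j with hgv
  set S : ℝ := ∑ j ∈ F, tlam j * (d j)^2 with hS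
  have hgw : gv ⬝ᵥ w = S := by
    rw [hgv, sum_dp, hS]
    apply Finset.sum_congr rfl
    intro j _
    rw [smul_dotProduct, smul_eq_mul, htuw j]
    rw [hd]
    ring
  have htugv : ∀ j ∈ F, tu j ⬝ᵥ gv = d j := by
    intro j hj
    rw [hgv, dp_sum]
    simp only [dotProduct_smul, smul_eq_mul, htt, mul_ite, mul_zero]
    rw [Finset.sum_ite_eq, if_pos hj, mul_one_div, mul_div_assoc,
      div_self (htpos j).ne', mul_one]
  have hgg : gv ⬝ᵥ gv = S := by
    nth_rewrite 1 [hgv]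
    rw [sum_dp, hS]
    apply Finset.sum_congr rfl
    intro j hj
    rw [smul_dotProduct, smul_eq_mul, htugv j hj]
    ring
  have hSnn : 0 ≤ S := by
    rw [hS]
    exact Finset.sum_nonneg fun j _ => mul_nonneg (htpos j).le (sq_nonneg _)
  have hgwb : gv ⬝ᵥ w ≤ etaK A P * Real.sqrt S * aN A w := by
    have h1 : gv ⬝ᵥ w = ((A⁻¹ *ᵥ gv) - P (A⁻¹ *ᵥ gv)) ⬝ᵥ (A *ᵥ w) := by
      rw [sub_dotProduct]
      have h2 : (A⁻¹ *ᵥ gv) ⬝ᵥ (A *ᵥ w) = gv ⬝ᵥ w := by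
        rw [bsymm hA, mulVec_inv_cancel hA, dotProduct_comm]
      have h3 : (P (A⁻¹ *ᵥ gv)) ⬝ᵥ (A *ᵥ w) = 0 := by
        rw [bsymm hA]
        exact hwv _ (hPmem _)
      rw [h2, h3, sub_zero]
    rw [h1]
    have hl2 : l2N gv = Real.sqrt S := by
      unfold l2N
      rw [hgg]
    calc ((A⁻¹ *ᵥ gv) - P (A⁻¹ *ᵥ gv)) ⬝ᵥ (A *ᵥ w)
        ≤ aN A ((A⁻¹ *ᵥ gv) - P (A⁻¹ *ᵥ gv)) * aN A w := cauchy' hA _ _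
      _ ≤ (etaK A P * l2N gv) * aN A w :=
          mul_le_mul_of_nonneg_right (etaK_bound hA K P hPmem hPproj gv)
            (Real.sqrt_nonneg _)
      _ = etaK A P * Real.sqrt S * aN A w := by rw [hl2]
  have hSb : S ≤ (etaK A P)^2 * (w ⬝ᵥ (A *ᵥ w)) := by
    rcases eq_or_lt_of_le hSnn with h0 | hpos
    · rw [← h0]
      exact mul_nonneg (sq_nonneg _) (bnonneg hA w)
    · have hsq := Real.mul_self_sqrt hSnn
      have h4 : Real.sqrt S * Real.sqrt S ≤ (etaK A P * aN A w) * Real.sqrt S := by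
        rw [hsq]
        calc S = gv ⬝ᵥ w := hgw.symm
          _ ≤ etaK A P * Real.sqrt S * aN A w := hgwb
          _ = (etaK A P * aN A w) * Real.sqrt S := by ring
      have h5 : Real.sqrt S ≤ etaK A P * aN A w :=
        le_of_mul_le_mul_right h4 (Real.sqrt_pos.2 hpos)
      have haw : (aN A w)^2 = w ⬝ᵥ (A *ᵥ w) := Real.sq_sqrt (bnonneg hA w)
      nlinarith [h5, Real.sqrt_nonneg S, hsq, haw]
  set Cδ : ℝ := 1 / tlam ⟨k, hkm⟩ / δ i ^ 2 with hCδ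
  have hlamk := htpos ⟨k, hkm⟩
  have hC : 0 ≤ Cδ := by
    rw [hCδ]
    exact div_nonneg (one_div_nonneg.2 hlamk.le) (sq_nonneg _)
  have hT : ∑ j ∈ F, (c j)^2 ≤ Cδ * S := by
    rw [hS, Finset.mul_sum]
    apply Finset.sum_le_sum
    intro j hj
    have hj' := hj
    rw [hF, Finset.mem_filter] at hj'
    have hjk : k ≤ (j:ℕ) := not_lt.1 hj'.2
    have hmono : tlam ⟨k, hkm⟩ ≤ tlam j := htmono (show (⟨k, hkm⟩ : Fin m) ≤ j from hjk)
    have hdel := hδ i j hjk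
    have hδ2 : (δ i)^2 ≤ (1 / lam i - 1 / tlam j)^2 := by
      have h2 := mul_self_le_mul_self (hδpos i).le hdel
      calc (δ i)^2 = δ i * δ i := pow_two (δ i)
        _ ≤ |1 / tlam j - 1 / lam i| * |1 / tlam j - 1 / lam i| := h2
        _ = (1 / tlam j - 1 / lam i) * (1 / tlam j - 1 / lam i) := abs_mul_abs_self _
        _ = (1 / lam i - 1 / tlam j)^2 := by ring
    have hlamj := htpos j
    have e2 : tlam ⟨k, hkm⟩ * ((c j)^2 * (δ i)^2) ≤
        tlam j * ((c j)^2 * (1 / lam i - 1 / tlam j)^2) :=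
      mul_le_mul hmono (mul_le_mul_of_nonneg_left hδ2 (sq_nonneg _)) (by positivity)
        hlamj.le
    rw [hCδ]
    have hrw : 1 / tlam ⟨k, hkm⟩ / δ i ^ 2 * (tlam j * d j ^ 2)
        = (tlam j * d j ^ 2) / (tlam ⟨k, hkm⟩ * δ i ^ 2) := by
      field_simp
    rw [hrw, le_div_iff₀ (mul_pos hlamk (pow_pos (hδpos i) 2))]
    simp only [hd]
    linarith [e2]
  have hone : (0:ℝ) ≤ 1 + Cδ * (etaK A P)^2 := by
    have := mul_nonneg hC (sq_nonneg (etaK A P))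
    linarith
  have hfinal : (u i - E (u i)) ⬝ᵥ (A *ᵥ (u i - E (u i))) ≤
      (1 + Cδ * (etaK A P)^2) * (w ⬝ᵥ (A *ᵥ w)) := by
    rw [hpyth, hsv2]
    have h5 : ∑ j ∈ F, (c j)^2 ≤ Cδ * ((etaK A P)^2 * (w ⬝ᵥ (A *ᵥ w))) :=
      le_trans hT (mul_le_mul_of_nonneg_left hSb hC)
    nlinarith [h5]
  calc aN A (u i - E (u i))
      = Real.sqrt ((u i - E (u i)) ⬝ᵥ (A *ᵥ (u i - E (u i)))) := rfl
    _ ≤ Real.sqrt ((1 + Cδ * (etaK A P)^2) * (w ⬝ᵥ (A *ᵥ w))) :=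
        Real.sqrt_le_sqrt hfinal
    _ = Real.sqrt (1 + Cδ * (etaK A P)^2) * Real.sqrt (w ⬝ᵥ (A *ᵥ w)) :=
        Real.sqrt_mul hone _
    _ = Real.sqrt (1 + Cδ * (etaK A P)^2) * aN A w := rfl
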